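/- arXiv:1409.3804 — 10 statements merged into one kernel-verified Lean document; each statement's English description precedes it below -/
import Mathlib

section
/- Let S be a monad on Set and suppose there exist a set X and distinct elements x ≠ x' in X with η_X(x) = η_X(x'). Then for every set Y, the set SY has at most one element. -/
/-- A functor on the category of sets. -/
structure SetFunctor where
  obj : Type → Type
  map : ∀ {X Y : Type}, (X → Y) → obj X → obj Y
  map_id : ∀ (X : Type), map (id : X → X) = id
  map_comp : ∀ {X Y Z : Type} (f : X → Y) (g : Y → Z), map (g ∘ f) = map g ∘ map f

/-- A monad on the category of sets. -/
structure SetMonad extends SetFunctor where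
  unit : ∀ (X : Type), X → obj X
  mult : ∀ (X : Type), obj (obj X) → obj X
  unit_natural : ∀ {X Y : Type} (f : X → Y) (x : X), map f (unit X x) = unit Y (f x)
  mult_natural : ∀ {X Y : Type} (f : X → Y) (p : obj (obj X)),
      map f (mult X p) = mult Y (map (map f) p)
  left_unit : ∀ (X : Type) (p : obj X), mult X (unit (obj X) p) = p
  right_unit : ∀ (X : Type) (p : obj X), mult X (map (unit X) p) = p
  assoc : ∀ (X : Type) (p : obj (obj (obj X))),
      mult X (mult (obj X) p) = mult X (map (mult X) p)

/-- If the unit of a monad on Set fails to be injective at some set `X`,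
then `S Y` has at most one element for every set `Y`. -/
theorem setMonad_unit_not_injective_subsingleton (S : SetMonad) (X : Type) (x x' : X)
    (hxx : x ≠ x') (h : S.unit X x = S.unit X x') (Y : Type) (p q : S.obj Y) : p = q := by
  classical
  have hf : ∃ f : X → S.obj Y, f x = p ∧ f x' = q := by
    refine ⟨fun y => if y = x then p else q, by simp, by simp [hxx.symm]⟩
  obtain ⟨f, hfx, hfx'⟩ := hf
  have h1 : S.unit (S.obj Y) p = S.unit (S.obj Y) q := by
    rw [← hfx, ← hfx', ← S.unit_natural f x, ← S.unit_natural f x', h]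
  calc p = S.mult Y (S.unit (S.obj Y) p) := (S.left_unit Y p).symm
    _ = S.mult Y (S.unit (S.obj Y) q) := by rw [h1]
    _ = q := S.left_unit Y q
end

section
/- Let S be a monad on Set with injective unit (i.e., η_X is injective for every set X). For any injection m : X → Y and any p ∈ SX, if Sm(p) is in the range of η_Y, then p is in the range of η_X. Consequently X ↦ SX \ range(η_X) defines a functor on the category of sets and injections. -/
/-- A monad on Set preserves injections (including those with empty domain). -/
lemma SetMonad.map_injective (S : SetMonad) {X Y : Type} (m : X → Y)
    (hm : Function.Injective m) : Function.Injective (S.map m) := by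
  classical
  by_cases hSX : Nonempty (S.obj X)
  · obtain ⟨p₀⟩ := hSX
    set g : Y → S.obj X := fun y => if h : ∃ x, m x = y then S.unit X h.choose else p₀ with hg
    have hgm : g ∘ m = S.unit X := by
      funext x
      have h : ∃ x', m x' = m x := ⟨x, rfl⟩
      simp only [hg, Function.comp, dif_pos h]
      exact congrArg (S.unit X) (hm h.choose_spec)
    have hret : ∀ p, S.mult X (S.map g (S.map m p)) = p := by
      intro p
      have : S.map g (S.map m p) = S.map (S.unit X) p := by
        rw [← Function.comp_apply (f := S.map g), ← S.map_comp, hgm]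
      rw [this, S.right_unit]
    intro p q hpq
    have h1 := hret p
    rw [hpq, hret q] at h1
    exact h1.symm
  · intro p _ _
    exact absurd ⟨p⟩ hSX

/-- Unit reflection for consistent monads. -/
lemma SetMonad.unit_reflect (S : SetMonad)
    (hcons : ∀ X : Type, Function.Injective (S.unit X))
    {X Y : Type} (m : X → Y) (hm : Function.Injective m)
    (p : S.obj X) (hp : S.map m p ∈ Set.range (S.unit Y)) :
    p ∈ Set.range (S.unit X) := by
  classical
  obtain ⟨y, hy⟩ := hp
  by_cases hyr : ∃ x, m x = y
  · obtain ⟨x, rfl⟩ := hyr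
    refine ⟨x, ?_⟩
    apply S.map_injective m hm
    rw [← hy, S.unit_natural]
  · exfalso
    set f : Y → Option Y := fun z => some z with hf
    set g : Y → Option Y := fun z => if z = y then none else some z with hgdef
    have hfg : f ∘ m = g ∘ m := by
      funext x
      have : m x ≠ y := fun h => hyr ⟨x, h⟩
      simp [hf, hgdef, this]
    have h1 : S.map f (S.map m p) = S.map g (S.map m p) := by
      rw [← Function.comp_apply (f := S.map f), ← S.map_comp, hfg, S.map_comp,
        Function.comp_apply]
    rw [← hy, S.unit_natural, S.unit_natural] at h1
    have := hcons (Option Y) h1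
    simp [hf, hgdef] at this

/-- For a consistent monad `S` on Set (unit componentwise injective) and an injection
`m : X → Y`: if `S m p` lies in the range of the unit, so does `p`.  Consequently
`X ↦ S X \ range (η_X)` is functorial on sets and injections:  `S m` maps the unit
complement of `X` injectively into the unit complement of `Y`. -/
theorem unit_complement_functor (S : SetMonad)
    (hcons : ∀ X : Type, Function.Injective (S.unit X))
    (X Y : Type) (m : X → Y) (hm : Function.Injective m) :
    (∀ p : S.obj X, S.map m p ∈ Set.range (S.unit Y) → p ∈ Set.range (S.unit X)) ∧
    Set.MapsTo (S.map m) {p | p ∉ Set.range (S.unit X)} {q | q ∉ Set.range (S.unit Y)} ∧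
    Set.InjOn (S.map m) {p | p ∉ Set.range (S.unit X)} := by
  refine ⟨fun p hp => S.unit_reflect hcons m hm p hp, ?_, ?_⟩
  · intro p hp hq
    exact hp (S.unit_reflect hcons m hm p hq)
  · exact fun a _ b _ h => S.map_injective m hm h
end

section
/- Let S be a consistent monad on Set and λ a regular cardinal. If the underlying functor S preserves λ-filtered colimits, then its unit complement S̄ (as a functor on the category of sets and injections) preserves λ-filtered colimits of diagrams of injections. -/
open CategoryTheory

/-- A category is `lam`-filtered if every family of fewer than `lam` objects admits a
cocone object, and every family of fewer than `lam` parallel morphisms can be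
coequalized by some morphism. -/
def IsCardinalFiltered (J : Type) [Category J] (lam : Cardinal) : Prop :=
  (∀ (K : Type) (o : K → J), Cardinal.mk K < lam → ∃ c : J, ∀ k, Nonempty (o k ⟶ c)) ∧
  (∀ (a b : J) (K : Type) (h : K → (a ⟶ b)), Cardinal.mk K < lam →
    ∃ (c : J) (g : b ⟶ c), ∀ k k' : K, h k ≫ g = h k' ≫ g)

/-- Auxiliary: thin category wrapper used to change the hom universe. -/
structure ThinCat (J : Type) where as : J

instance ThinCat.category (J : Type) [Category J] : Category.{u} (ThinCat J) where
  Hom a b := ULift (PLift (Nonempty (a.as ⟶ b.as)))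
  id a := ⟨⟨⟨𝟙 a.as⟩⟩⟩
  comp f g := ⟨⟨⟨Classical.choice f.down.down ≫ Classical.choice g.down.down⟩⟩⟩
  id_comp f := rfl
  comp_id f := rfl
  assoc f g h := rfl

theorem ThinCat.hom_subsingleton {J : Type} [Category J] {a b : ThinCat J}
    (f g : a ⟶ b) : f = g := by
  rcases f with ⟨⟨_⟩⟩; rcases g with ⟨⟨_⟩⟩; rfl

/-- If a consistent monad `S` on Set preserves `lam`-filtered colimits (of diagrams of
injections, where a colimit cocone of injections is witnessed by joint surjectivity),
then so does its unit complement `S̄ X = S X \ range η_X`, as a functor on sets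
and injections. -/

theorem unit_complement_accessible (S : SetMonad)
    (hcons : ∀ X : Type, Function.Injective (S.unit X))
    (lam : Cardinal) (hreg : lam.IsRegular)
    (hacc : ∀ (J : Type) [Category J], IsCardinalFiltered J lam →
      ∀ (Dobj : J → Type) (Dmap : ∀ {i j : J}, (i ⟶ j) → Dobj i → Dobj j),
        (∀ (i : J) (x : Dobj i), Dmap (𝟙 i) x = x) →
        (∀ {i j k : J} (u : i ⟶ j) (v : j ⟶ k) (x : Dobj i),
          Dmap (u ≫ v) x = Dmap v (Dmap u x)) →
        (∀ {i j : J} (u : i ⟶ j), Function.Injective (Dmap u)) →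
        ∀ (V : Type) (ℓ : ∀ i : J, Dobj i → V),
          (∀ {i j : J} (u : i ⟶ j) (x : Dobj i), ℓ j (Dmap u x) = ℓ i x) →
          (∀ i : J, Function.Injective (ℓ i)) →
          (∀ v : V, ∃ (i : J) (x : Dobj i), ℓ i x = v) →
          ∀ p : S.obj V, ∃ (i : J) (x : S.obj (Dobj i)), S.map (ℓ i) x = p) :
    ∀ (J : Type) [Category J], IsCardinalFiltered J lam →
      ∀ (Dobj : J → Type) (Dmap : ∀ {i j : J}, (i ⟶ j) → Dobj i → Dobj j),
        (∀ (i : J) (x : Dobj i), Dmap (𝟙 i) x = x) →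
        (∀ {i j k : J} (u : i ⟶ j) (v : j ⟶ k) (x : Dobj i),
          Dmap (u ≫ v) x = Dmap v (Dmap u x)) →
        (∀ {i j : J} (u : i ⟶ j), Function.Injective (Dmap u)) →
        ∀ (V : Type) (ℓ : ∀ i : J, Dobj i → V),
          (∀ {i j : J} (u : i ⟶ j) (x : Dobj i), ℓ j (Dmap u x) = ℓ i x) →
          (∀ i : J, Function.Injective (ℓ i)) →
          (∀ v : V, ∃ (i : J) (x : Dobj i), ℓ i x = v) →
          ∀ p : S.obj V, p ∉ Set.range (S.unit V) →
            ∃ (i : J) (x : S.obj (Dobj i)),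
              x ∉ Set.range (S.unit (Dobj i)) ∧ S.map (ℓ i) x = p := by
  intro J inst hfil Dobj Dmap hid hcomp hinj V ℓ hnat hℓinj hsurj p hp
  have hDuniq : ∀ {a b : J} (u u' : a ⟶ b) (x : Dobj a), Dmap u x = Dmap u' x := by
    intro a b u u' x
    apply hℓinj b
    rw [hnat u x, hnat u' x]
  let Dmap' : ∀ {a b : ThinCat J}, (a ⟶ b) → Dobj a.as → Dobj b.as :=
    fun f => Dmap (Classical.choice f.down.down)
  have hfil' : IsCardinalFiltered (ThinCat J) lam := by
    constructor
    · intro K o hK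
      obtain ⟨c, hc⟩ := hfil.1 K (fun k => (o k).as) hK
      exact ⟨⟨c⟩, fun k => ⟨⟨⟨hc k⟩⟩⟩⟩
    · intro a b K h hK
      exact ⟨b, 𝟙 b, fun k k' => by rw [ThinCat.hom_subsingleton (h k) (h k')]⟩
  have hid' : ∀ (a : ThinCat J) (x : Dobj a.as), Dmap' (𝟙 a) x = x := by
    intro a x
    show Dmap _ x = x
    rw [hDuniq _ (𝟙 a.as) x, hid]
  have hcomp' : ∀ {a b c : ThinCat J} (u : a ⟶ b) (v : b ⟶ c) (x : Dobj a.as),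
      Dmap' (u ≫ v) x = Dmap' v (Dmap' u x) := by
    intro a b c u v x
    show Dmap _ x = Dmap _ (Dmap _ x)
    rw [hDuniq _ ((Classical.choice u.down.down) ≫ (Classical.choice v.down.down)) x, hcomp]
  have hinj' : ∀ {a b : ThinCat J} (u : a ⟶ b), Function.Injective (Dmap' u) :=
    fun u => hinj _
  have hnat' : ∀ {a b : ThinCat J} (u : a ⟶ b) (x : Dobj a.as),
      ℓ b.as (Dmap' u x) = ℓ a.as x :=
    fun u x => hnat _ x
  have hsurj' : ∀ v : V, ∃ (i : ThinCat J) (x : Dobj i.as), ℓ i.as x = v := by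
    intro v
    obtain ⟨i, x, hx⟩ := hsurj v
    exact ⟨⟨i⟩, x, hx⟩
  obtain ⟨i, x, hx⟩ :=
    hacc (ThinCat J) hfil' (fun a => Dobj a.as) @Dmap' hid' @hcomp' @hinj'
      V (fun a => ℓ a.as) @hnat' (fun a => hℓinj a.as) hsurj' p
  refine ⟨i.as, x, ?_, hx⟩
  rintro ⟨y, rfl⟩
  exact hp ⟨ℓ i.as y, by rw [← hx, S.unit_natural]⟩
end

section
/- Let H be an endofunctor on the category Inj of sets and injections. If there exists any H-algebra (a set X with an injection HX → X, or more generally a morphism θ : HX → X in Inj), then the initial chain of H converges at some ordinal, and hence an initial H-algebra exists. -/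
/-- An endofunctor on the category `Inj` of sets and injections. -/
structure InjFunctor1 where
  obj : Type → Type
  map : ∀ {X Y : Type}, (X ↪ Y) → (obj X ↪ obj Y)
  map_id : ∀ (X : Type) (p : obj X), map (Function.Embedding.refl X) p = p
  map_comp : ∀ {X Y Z : Type} (f : X ↪ Y) (g : Y ↪ Z) (p : obj X),
      map (f.trans g) p = map g (map f p)

/-- The initial chain `0 → H0 → H²0 → ⋯` of an endofunctor `H` on `Inj`,
with colimits (unions along injections) at limit ordinals. -/
structure InitialChain1 (H : InjFunctor1) where
  obj : Ordinal → Type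
  hom : ∀ {a b : Ordinal}, a ≤ b → (obj a ↪ obj b)
  hom_refl : ∀ (a : Ordinal) (x : obj a), hom (le_refl a) x = x
  hom_trans : ∀ {a b c : Ordinal} (hab : a ≤ b) (hbc : b ≤ c) (x : obj a),
      hom (hab.trans hbc) x = hom hbc (hom hab x)
  zero_isEmpty : IsEmpty (obj 0)
  succ : ∀ (a : Ordinal), obj (a + 1) ≃ H.obj (obj a)
  succ_hom : ∀ {a b : Ordinal} (hab : a ≤ b) (x : obj (a + 1)),
      succ b (hom (add_le_add_left hab 1) x) = H.map (hom hab) (succ a x)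
  limit_surj : ∀ (a : Ordinal), Order.IsSuccLimit a → ∀ (x : obj a),
      ∃ (b : Ordinal) (h : b < a) (y : obj b), hom h.le y = x

namespace InitChainAux

theorem map_congr (H : InjFunctor1) {A B : Type} (e e' : A ↪ B)
    (h : ∀ x, e x = e' x) (p : H.obj A) : H.map e p = H.map e' p := by
  have : e = e' := DFunLike.ext _ _ h
  rw [this]

variable {H : InjFunctor1} (C : InitialChain1 H) {Y : Type} (φ : H.obj Y ↪ Y)

/-- `f : C.obj a → Y` is a "good" cocone component into the algebra `(Y, φ)`. -/
def Good (a : Ordinal) (f : C.obj a → Y) : Prop :=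
  Function.Injective f ∧
  ∀ (c : Ordinal) (h : c + 1 ≤ a) (z : C.obj (c + 1)) (e : C.obj c ↪ Y),
    (∀ y, e y = f (C.hom (((le_self_add : c ≤ c + 1)).trans h) y)) →
    f (C.hom h z) = φ (H.map e (C.succ c z))

theorem lt_of_sle {c a : Ordinal} (h : c + 1 ≤ a) : c < a := by
  rw [Ordinal.add_one_eq_succ] at h
  exact lt_of_lt_of_le (Order.lt_succ c) h

theorem decompose {a : Ordinal} (ha : a ≠ 0) (x : C.obj a) :
    ∃ (c : Ordinal) (h : c + 1 ≤ a) (z : C.obj (c + 1)), C.hom h z = x := by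
  rcases Ordinal.zero_or_succ_or_isSuccLimit a with h0 | ⟨c, hc⟩ | hl
  · exact absurd h0 ha
  · rw [← Ordinal.add_one_eq_succ] at hc
    subst hc
    exact ⟨c, le_refl _, x, C.hom_refl _ x⟩
  · obtain ⟨b, hb, y, hy⟩ := C.limit_surj a hl x
    have hba : b + 1 ≤ a := by
      rw [Ordinal.add_one_eq_succ]; exact (hl.succ_lt hb).le
    refine ⟨b, hba, C.hom ((le_self_add : b ≤ b + 1)) y, ?_⟩
    rw [← C.hom_trans ((le_self_add : b ≤ b + 1)) hba y]
    exact hy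

theorem Good.restrict {b : Ordinal} {g : C.obj b → Y} (hg : Good C φ b g) {a : Ordinal}
    (hab : a ≤ b) : Good C φ a (fun x => g (C.hom hab x)) := by
  constructor
  · exact hg.1.comp (C.hom hab).injective
  · intro c h z e he
    have h' : c + 1 ≤ b := h.trans hab
    have he' : ∀ y, e y = g (C.hom (((le_self_add : c ≤ c + 1)).trans h') y) := by
      intro y
      rw [he y]
      exact (congrArg g (C.hom_trans (((le_self_add : c ≤ c + 1)).trans h) hab y)).symm
    have h2 := hg.2 c h' z e he'
    calc (fun x => g (C.hom hab x)) (C.hom h z)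
        = g (C.hom h' z) := (congrArg g (C.hom_trans h hab z)).symm
      _ = φ (H.map e (C.succ c z)) := h2

theorem Good.unique : ∀ a (f g : C.obj a → Y), Good C φ a f → Good C φ a g →
    ∀ x, f x = g x := by
  intro a
  induction a using Ordinal.induction with
  | h a IH =>
    intro f g hf hg x
    by_cases ha : a = 0
    · subst ha; exact (C.zero_isEmpty.false x).elim
    obtain ⟨c, h, z, rfl⟩ := decompose C ha x
    have hc : c < a := lt_of_sle h
    have hca : c ≤ a := ((le_self_add : c ≤ c + 1)).trans h
    have hfr : Good C φ c (fun y => f (C.hom hca y)) := hf.restrict C φ hca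
    have hgr : Good C φ c (fun y => g (C.hom hca y)) := hg.restrict C φ hca
    have heq : ∀ y, f (C.hom hca y) = g (C.hom hca y) := IH c hc _ _ hfr hgr
    rw [hf.2 c h z ⟨fun y => f (C.hom hca y), hfr.1⟩ (fun y => rfl),
        hg.2 c h z ⟨fun y => g (C.hom hca y), hgr.1⟩ (fun y => rfl)]
    congr 1
    exact map_congr H _ _ heq _

/-- coherence of good maps along chain morphisms -/
theorem Good.coh {a b : Ordinal} {f : C.obj a → Y} {g : C.obj b → Y}
    (hf : Good C φ a f) (hg : Good C φ b g) (hab : a ≤ b) (y : C.obj a) :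
    f y = g (C.hom hab y) :=
  Good.unique C φ a f (fun x => g (C.hom hab x)) hf (hg.restrict C φ hab) y

/-- key computation for the successor-step map -/
theorem succ_comp {b : Ordinal} (g : C.obj b ↪ Y) {c : Ordinal} (h : c + 1 ≤ b + 1)
    (hcb : c ≤ b) (z : C.obj (c + 1)) :
    φ (H.map g (C.succ b (C.hom h z))) =
      φ (H.map ((C.hom hcb).trans g) (C.succ c z)) := by
  have h1 : C.succ b (C.hom h z) = H.map (C.hom hcb) (C.succ c z) := C.succ_hom hcb z
  rw [h1, ← H.map_comp]

theorem sle_le {c b : Ordinal} (h : c + 1 ≤ b + 1) : c ≤ b := by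
  rw [Ordinal.add_one_eq_succ, Ordinal.add_one_eq_succ] at h
  exact Order.succ_le_succ_iff.mp h

theorem succ_extend {b : Ordinal} {g : C.obj b → Y} (hg : Good C φ b g)
    (y : C.obj b) :
    φ (H.map ⟨g, hg.1⟩ (C.succ b (C.hom ((le_self_add : b ≤ b + 1)) y))) = g y := by
  by_cases hb : b = 0
  · subst hb; exact (C.zero_isEmpty.false y).elim
  obtain ⟨c, h, z, rfl⟩ := decompose C hb y
  have hcb : c ≤ b := ((le_self_add : c ≤ c + 1)).trans h
  have h1 : c + 1 ≤ b + 1 := h.trans ((le_self_add : b ≤ b + 1))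
  rw [← C.hom_trans h ((le_self_add : b ≤ b + 1)) z]
  rw [succ_comp C φ ⟨g, hg.1⟩ h1 hcb z]
  exact (hg.2 c h z ((C.hom hcb).trans ⟨g, hg.1⟩) (fun y => rfl)).symm

theorem good_succ {b : Ordinal} {g : C.obj b → Y} (hg : Good C φ b g) :
    Good C φ (b + 1) (fun x => φ (H.map ⟨g, hg.1⟩ (C.succ b x))) := by
  constructor
  · intro x1 x2 hx
    exact (C.succ b).injective ((H.map ⟨g, hg.1⟩).injective (φ.injective hx))
  · intro c h z e he
    have hcb : c ≤ b := sle_le h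
    show φ (H.map ⟨g, hg.1⟩ (C.succ b (C.hom h z))) = _
    rw [succ_comp C φ ⟨g, hg.1⟩ h hcb z]
    congr 1
    refine map_congr H _ _ (fun y => ?_) _
    show g (C.hom hcb y) = e y
    rw [he y]
    have : C.hom (((le_self_add : c ≤ c + 1)).trans h) y
        = C.hom ((le_self_add : b ≤ b + 1)) (C.hom hcb y) :=
      C.hom_trans hcb ((le_self_add : b ≤ b + 1)) y
    rw [this]
    exact (succ_extend C φ hg (C.hom hcb y)).symm

theorem existsGood : ∀ a : Ordinal, ∃ f : C.obj a → Y, Good C φ a f := by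
  intro a
  induction a using Ordinal.induction with
  | h a IH =>
    rcases Ordinal.zero_or_succ_or_isSuccLimit a with h0 | ⟨b, hb⟩ | hl
    · subst h0
      refine ⟨fun x => (C.zero_isEmpty.false x).elim, fun x => (C.zero_isEmpty.false x).elim,
        fun c h => ?_⟩
      rw [Ordinal.add_one_eq_succ, nonpos_iff_eq_zero] at h
      exact absurd h (Ordinal.succ_ne_zero c)
    · rw [← Ordinal.add_one_eq_succ] at hb; subst hb
      obtain ⟨g, hg⟩ := IH b (lt_of_sle (le_refl (b + 1)))
      exact ⟨_, good_succ C φ hg⟩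
    · classical
      have F : ∀ b, b < a → {f : C.obj b → Y // Good C φ b f} :=
        fun b hb => ⟨(IH b hb).choose, (IH b hb).choose_spec⟩
      have D : ∀ x : C.obj a, ∃ b, ∃ h : b < a, ∃ y : C.obj b, C.hom h.le y = x :=
        C.limit_surj a hl
      set f : C.obj a → Y := fun x =>
        (F (D x).choose (D x).choose_spec.choose).1
          (D x).choose_spec.choose_spec.choose with hf
      have hfact : ∀ x, C.hom ((D x).choose_spec.choose).le
          (D x).choose_spec.choose_spec.choose = x :=
        fun x => (D x).choose_spec.choose_spec.choose_spec
      have push : ∀ (c : Ordinal) (hc : c < a) (y : C.obj c) (d : Ordinal) (hd : d < a)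
          (w : C.obj d), C.hom hc.le y = C.hom hd.le w →
          (F c hc).1 y = (F d hd).1 w := by
        intro c hc y d hd w hxy
        have hm : max c d < a := max_lt hc hd
        have h1 : (F c hc).1 y = (F (max c d) hm).1 (C.hom (le_max_left c d) y) :=
          Good.coh C φ (F c hc).2 (F _ hm).2 (le_max_left c d) y
        have h2 : (F d hd).1 w = (F (max c d) hm).1 (C.hom (le_max_right c d) w) :=
          Good.coh C φ (F d hd).2 (F _ hm).2 (le_max_right c d) w
        have h3 : C.hom (le_max_left c d) y = C.hom (le_max_right c d) w := by
          apply (C.hom hm.le).injective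
          rw [← C.hom_trans (le_max_left c d) hm.le y,
              ← C.hom_trans (le_max_right c d) hm.le w]
          exact hxy
        rw [h1, h3, h2]
      have claim : ∀ (d : Ordinal) (hd : d < a) (w : C.obj d),
          f (C.hom hd.le w) = (F d hd).1 w := by
        intro d hd w
        exact push _ _ _ d hd w (hfact (C.hom hd.le w))
      refine ⟨f, ?_, ?_⟩
      · intro x x' hxx
        obtain ⟨c, hc, y, hy⟩ := D x
        obtain ⟨c', hc', y', hy'⟩ := D x'
        rw [← hy, ← hy'] at hxx ⊢
        rw [claim c hc y, claim c' hc' y'] at hxx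
        have hm : max c c' < a := max_lt hc hc'
        have h1 := Good.coh C φ (F c hc).2 (F _ hm).2 (le_max_left c c') y
        have h2 := Good.coh C φ (F c' hc').2 (F _ hm).2 (le_max_right c c') y'
        rw [h1, h2] at hxx
        have h3 := (F _ hm).2.1 hxx
        calc C.hom hc.le y
            = C.hom hm.le (C.hom (le_max_left c c') y) := C.hom_trans _ hm.le y
          _ = C.hom hm.le (C.hom (le_max_right c c') y') := by rw [h3]
          _ = C.hom hc'.le y' := (C.hom_trans _ hm.le y').symm
      · intro c h z e he
        have hc : c < a := lt_of_sle h
        have hs : c + 1 < a := by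
          have := hl.succ_lt hc
          rwa [Ordinal.add_one_eq_succ]
        have he2 : ∀ y, e y = (F c hc).1 y := fun y => (he y).trans (claim c hc y)
        have hz : f (C.hom h z) = (F (c + 1) hs).1 z := claim (c + 1) hs z
        rw [hz]
        have hmain := (F (c + 1) hs).2.2 c (le_refl (c + 1)) z e (fun y =>
          (he2 y).trans (Good.coh C φ (F c hc).2 (F (c + 1) hs).2
            ((le_self_add : c ≤ c + 1)) y))
        rw [C.hom_refl (c + 1) z] at hmain
        exact hmain

end InitChainAux

open InitChainAux

/-- If an endofunctor `H` on the category of sets and injections has any algebra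
`θ : H X ↪ X`, then its initial chain converges at some ordinal, and hence an
initial `H`-algebra exists. -/
theorem initialChain_converges_of_algebra (H : InjFunctor1) (C : InitialChain1 H)
    (X : Type) (θ : H.obj X ↪ X) :
    (∃ a : Ordinal, Function.Surjective (C.hom (le_self_add : a ≤ a + 1))) ∧
    (∃ (A : Type) (ρ : H.obj A ↪ A), ∀ (Y : Type) (φ : H.obj Y ↪ Y),
      ∃! f : A ↪ Y, ∀ x : H.obj A, f (ρ x) = φ (H.map f x)) := by
  classical
  have B : ∀ {Z : Type} (ψ : H.obj Z ↪ Z) (a : Ordinal),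
      {f : C.obj a → Z // Good C ψ a f} :=
    fun {Z} ψ a => ⟨(existsGood C ψ a).choose, (existsGood C ψ a).choose_spec⟩
  have key : ∃ a : Ordinal, Function.Surjective (C.hom ((le_self_add : a ≤ a + 1))) := by
    by_contra hns
    push_neg at hns
    have mono : ∀ {a b : Ordinal} (hab : a ≤ b),
        Set.range (B θ a).1 ⊆ Set.range (B θ b).1 := by
      intro a b hab x hx
      obtain ⟨y, rfl⟩ := hx
      exact ⟨C.hom hab y, (Good.coh C θ (B θ a).2 (B θ b).2 hab y).symm⟩
    have strict : ∀ a : Ordinal, Set.range (B θ a).1 ⊂ Set.range (B θ (a + 1)).1 := by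
      intro a
      refine ⟨mono ((le_self_add : a ≤ a + 1)), fun hsub => ?_⟩
      have hnsa := hns a
      simp only [Function.Surjective, not_forall] at hnsa
      obtain ⟨z, hz⟩ := hnsa
      obtain ⟨y, hy⟩ := hsub ⟨z, rfl⟩
      have : (B θ a).1 y = (B θ (a + 1)).1 (C.hom ((le_self_add : a ≤ a + 1)) y) :=
        Good.coh C θ (B θ a).2 (B θ (a + 1)).2 _ y
      rw [this] at hy
      exact hz ⟨y, (B θ (a + 1)).2.1 hy⟩
    have hlt2 : ∀ {a b : Ordinal}, a < b →
        Set.range (B θ a).1 ⊂ Set.range (B θ b).1 := by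
      intro a b hab
      have h1 : a + 1 ≤ b := by rwa [Ordinal.add_one_eq_succ, Order.succ_le_iff]
      exact ssubset_of_ssubset_of_subset (strict a) (mono h1)
    have hinj : Function.Injective
        (fun a : Ordinal => ULift.up.{1, 0} (Set.range (B θ a).1)) := by
      intro a b hab
      have hab' : Set.range (B θ a).1 = Set.range (B θ b).1 := congrArg ULift.down hab
      rcases lt_trichotomy a b with hlt | heq | hlt
      · exact absurd hab' (hlt2 hlt).ne
      · exact heq
      · exact absurd hab' (hlt2 hlt).ne'
    exact not_injective_of_ordinal _ hinj
  obtain ⟨a, hsurj⟩ := key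
  refine ⟨⟨a, hsurj⟩, ?_⟩
  have hbij : Function.Bijective (C.hom ((le_self_add : a ≤ a + 1))) :=
    ⟨(C.hom _).injective, hsurj⟩
  let k : C.obj a ≃ C.obj (a + 1) := Equiv.ofBijective _ hbij
  refine ⟨C.obj a, ((C.succ a).symm.trans k.symm).toEmbedding, fun Y φ => ?_⟩
  set ρ := ((C.succ a).symm.trans k.symm).toEmbedding with hρdef
  let g := B φ a
  let g1 := B φ (a + 1)
  have hcoh : ∀ y, g.1 y = g1.1 (C.hom ((le_self_add : a ≤ a + 1)) y) :=
    fun y => Good.coh C φ g.2 g1.2 _ y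
  let ef : C.obj a ↪ Y := ⟨g.1, g.2.1⟩
  have hk : ∀ w : C.obj a, C.hom ((le_self_add : a ≤ a + 1)) w = k w := fun w => rfl
  have halg : ∀ x : H.obj (C.obj a), ef (ρ x) = φ (H.map ef x) := by
    intro x
    show g.1 (k.symm ((C.succ a).symm x)) = _
    rw [hcoh, hk, k.apply_symm_apply]
    have hmain := g1.2.2 a (le_refl (a + 1)) ((C.succ a).symm x) ef
      (fun y => hcoh y)
    rw [C.hom_refl, (C.succ a).apply_symm_apply] at hmain
    exact hmain
  refine ⟨ef, halg, ?_⟩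
  intro f' hf'
  have hgood : Good C φ a ⇑f' := by
    refine ⟨f'.injective, ?_⟩
    intro c h z e he
    have hca : c ≤ a := ((le_self_add : c ≤ c + 1)).trans h
    have hx := hf' (C.succ a (k (C.hom h z)))
    have hρ : ρ (C.succ a (k (C.hom h z))) = C.hom h z := by
      show k.symm ((C.succ a).symm (C.succ a (k (C.hom h z)))) = _
      rw [(C.succ a).symm_apply_apply, k.symm_apply_apply]
    rw [hρ] at hx
    have hk2 : k (C.hom h z) = C.hom (add_le_add_left hca 1) z := by
      show C.hom ((le_self_add : a ≤ a + 1)) (C.hom h z) = _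
      rw [← C.hom_trans h ((le_self_add : a ≤ a + 1)) z]
    rw [hk2, C.succ_hom hca z, ← H.map_comp] at hx
    rw [hx]
    congr 1
    exact map_congr H _ _ (fun y => (he y).symm) _
  have hptw : ∀ y, f' y = ef y := fun y =>
    Good.unique C φ a ⇑f' g.1 hgood g.2 y
  exact DFunLike.ext f' ef hptw
end

section
/- For every endofunctor H on Set there exists an endofunctor H̄ on Set that preserves finite intersections (pullbacks of pairs of injections) and agrees with H on all nonempty sets and all functions between nonempty sets. Specifically, H̄∅ may be taken as the equalizer of Ht, Hf : H1 → H2, where t, f : 1 → 2 are the two maps. -/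
/-- `F` preserves finite intersections: the pullback of any pair of injections is
sent to a pullback. -/
def PreservesFiniteIntersections (F : SetFunctor) : Prop :=
  ∀ (X A B : Type) (f : A → X) (g : B → X),
    Function.Injective f → Function.Injective g →
    ∀ (u : F.obj A) (v : F.obj B), F.map f u = F.map g v →
      ∃! w : F.obj {p : A × B // f p.1 = g p.2},
        F.map (fun p : {p : A × B // f p.1 = g p.2} => p.1.1) w = u ∧
        F.map (fun p : {p : A × B // f p.1 = g p.2} => p.1.2) w = v

noncomputable section
namespace TrnkovaAux
open Classical

theorem mapc (F : SetFunctor) {X Y Z : Type} (f : X → Y) (g : Y → Z) (x : F.obj X) :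
    F.map g (F.map f x) = F.map (g ∘ f) x := by rw [F.map_comp]; rfl

def Eq0 (H : SetFunctor) : Type :=
  {a : H.obj PUnit // H.map (fun _ => true) a = H.map (fun _ => false) a}

attribute [reducible] Eq0

theorem punit_cancel (H : SetFunctor) {Y : Type} (k : PUnit → Y)
    {a b : H.obj PUnit} (h : H.map k a = H.map k b) : a = b := by
  have h2 := congrArg (H.map fun _ : Y => PUnit.unit) h
  rw [mapc, mapc] at h2
  have hc : (fun _ : Y => PUnit.unit) ∘ k = id := rfl
  rwa [hc, H.map_id] at h2

theorem const_indep (H : SetFunctor) {Z : Type} (u v : PUnit → Z) (a : Eq0 H) :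
    H.map u a.1 = H.map v a.1 := by
  set w : Bool → Z := fun b => if b then u PUnit.unit else v PUnit.unit with hw
  have hu : u = w ∘ (fun _ => true) := funext fun x => by cases x; simp [hw]
  have hv : v = w ∘ (fun _ => false) := funext fun x => by cases x; simp [hw]
  rw [hu, hv, ← mapc, ← mapc, a.2]

def ob (H : SetFunctor) (X : Type) : Type :=
  if Nonempty X then H.obj X else Eq0 H

def toH (H : SetFunctor) {X : Type} (hX : Nonempty X) : ob H X ≃ H.obj X :=
  Equiv.cast (if_pos hX)

def toE (H : SetFunctor) {X : Type} (hX : ¬ Nonempty X) : ob H X ≃ Eq0 H :=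
  Equiv.cast (if_neg hX)

def mp (H : SetFunctor) {X Y : Type} (f : X → Y) (a : ob H X) : ob H Y :=
  if hY : Nonempty Y then
    (toH H hY).symm
      (if hX : Nonempty X then H.map f (toH H hX a)
       else H.map (fun _ : PUnit => hY.some) (toE H hX a).1)
  else (toE H hY).symm (toE H (fun hX => hY ⟨f hX.some⟩) a)

theorem mp_pos_pos (H : SetFunctor) {X Y : Type} (hX : Nonempty X) (hY : Nonempty Y)
    (f : X → Y) (a : ob H X) :
    mp H f a = (toH H hY).symm (H.map f (toH H hX a)) := by
  rw [mp, dif_pos hY, dif_pos hX]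

theorem mp_neg_pos (H : SetFunctor) {X Y : Type} (hX : ¬ Nonempty X) (hY : Nonempty Y)
    (f : X → Y) (a : ob H X) :
    mp H f a = (toH H hY).symm (H.map (fun _ : PUnit => hY.some) (toE H hX a).1) := by
  rw [mp, dif_pos hY, dif_neg hX]

theorem mp_neg_neg (H : SetFunctor) {X Y : Type} (hX : ¬ Nonempty X) (hY : ¬ Nonempty Y)
    (f : X → Y) (a : ob H X) :
    mp H f a = (toE H hY).symm (toE H hX a) := by
  rw [mp, dif_neg hY]

theorem mp_id (H : SetFunctor) (X : Type) : mp H (id : X → X) = id := by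
  funext a
  by_cases hX : Nonempty X
  · rw [mp_pos_pos H hX hX, H.map_id]; simp
  · rw [mp_neg_neg H hX hX]; simp

theorem mp_comp (H : SetFunctor) {X Y Z : Type} (f : X → Y) (g : Y → Z) :
    mp H (g ∘ f) = mp H g ∘ mp H f := by
  funext a
  simp only [Function.comp_apply]
  by_cases hZ : Nonempty Z
  · by_cases hY : Nonempty Y
    · by_cases hX : Nonempty X
      · rw [mp_pos_pos H hX hZ, mp_pos_pos H hX hY, mp_pos_pos H hY hZ,
          Equiv.apply_symm_apply, mapc]
      · rw [mp_neg_pos H hX hZ, mp_neg_pos H hX hY, mp_pos_pos H hY hZ,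
          Equiv.apply_symm_apply, mapc]
        exact congrArg _ (const_indep H _ _ _)
    · have hX : ¬ Nonempty X := fun hX => hY ⟨f hX.some⟩
      rw [mp_neg_pos H hX hZ, mp_neg_neg H hX hY, mp_neg_pos H hY hZ,
        Equiv.apply_symm_apply]
  · have hY : ¬ Nonempty Y := fun hY => hZ ⟨g hY.some⟩
    have hX : ¬ Nonempty X := fun hX => hY ⟨f hX.some⟩
    rw [mp_neg_neg H hX hZ, mp_neg_neg H hX hY, mp_neg_neg H hY hZ,
      Equiv.apply_symm_apply]

theorem mpc (H : SetFunctor) {X Y Z : Type} (f : X → Y) (g : Y → Z) (x : ob H X) :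
    mp H g (mp H f x) = mp H (g ∘ f) x := by rw [mp_comp]; rfl

def bar (H : SetFunctor) : SetFunctor where
  obj := ob H
  map := mp H
  map_id := mp_id H
  map_comp := mp_comp H

attribute [reducible] bar

theorem mp_injective (H : SetFunctor) {X Y : Type} (f : X → Y)
    (hf : Function.Injective f) : Function.Injective (mp H f) := by
  intro a b h
  by_cases hX : Nonempty X
  · haveI := hX
    obtain ⟨r, hr⟩ := hf.hasLeftInverse
    have h2 : mp H r (mp H f a) = mp H r (mp H f b) := congrArg _ h
    rw [mpc, mpc] at h2
    have hrf : r ∘ f = id := funext hr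
    rwa [hrf, mp_id] at h2
  · by_cases hY : Nonempty Y
    · rw [mp_neg_pos H hX hY, mp_neg_pos H hX hY] at h
      have h2 := (toH H hY).symm.injective h
      have h3 := punit_cancel H _ h2
      exact (toE H hX).injective (Subtype.ext h3)
    · rw [mp_neg_neg H hX hY, mp_neg_neg H hX hY] at h
      exact (toE H hX).injective ((toE H hY).symm.injective h)

theorem bar_preserves (H : SetFunctor) : PreservesFiniteIntersections (bar H) := by
  intro X A B f g hf hg u v huv
  replace huv : mp H f u = mp H g v := huv
  set P := {p : A × B // f p.1 = g p.2} with hPdef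
  have hπ₁inj : Function.Injective (fun p : P => p.1.1) := by
    intro p q h
    have h2 : p.1.2 = q.1.2 := hg (by
      have hp := p.2; have hq := q.2
      dsimp only at h
      rw [← hp, ← hq, h])
    exact Subtype.ext (Prod.ext h h2)
  suffices hex : ∃ w : ob H P, mp H (fun p : P => p.1.1) w = u ∧
      mp H (fun p : P => p.1.2) w = v by
    obtain ⟨w, h1, h2⟩ := hex
    exact ⟨w, ⟨h1, h2⟩, fun y hy => mp_injective H _ hπ₁inj (hy.1.trans h1.symm)⟩
  by_cases hP : Nonempty P
  · -- nonempty intersection case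
    obtain ⟨p₀⟩ := hP
    set p' : X → A := fun x => if h : ∃ a, f a = x then h.choose else p₀.1.1 with hp'
    set q' : X → B := fun x => if h : ∃ b, g b = x then h.choose else p₀.1.2 with hq'
    set r' : X → P := fun x =>
      if h : (∃ a, f a = x) ∧ (∃ b, g b = x) then
        ⟨(h.1.choose, h.2.choose), by rw [h.1.choose_spec, h.2.choose_spec]⟩
      else p₀ with hr'
    have e1 : (f ∘ p') ∘ f = f := by
      funext a
      have h : ∃ a', f a' = f a := ⟨a, rfl⟩
      simp only [Function.comp_apply, hp', dif_pos h]
      rw [h.choose_spec]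
    have e2 : (g ∘ q') ∘ g = g := by
      funext b
      have h : ∃ b', g b' = g b := ⟨b, rfl⟩
      simp only [Function.comp_apply, hq', dif_pos h]
      rw [h.choose_spec]
    have e3 : (f ∘ fun p : P => p.1.1) ∘ r' = (f ∘ p') ∘ (g ∘ q') := by
      funext x
      simp only [Function.comp_apply, hp', hq', hr']
      by_cases hb : ∃ b, g b = x
      · rw [dif_pos hb, hb.choose_spec]
        by_cases ha : ∃ a, f a = x
        · rw [dif_pos (And.intro ha hb), dif_pos ha, ha.choose_spec]
        · rw [dif_neg (fun hc : (∃ a, f a = x) ∧ (∃ b, g b = x) => ha hc.1), dif_neg ha]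
      · rw [dif_neg hb, dif_neg (fun hc : (∃ a, f a = x) ∧ (∃ b, g b = x) => hb hc.2)]
        have h2 : ∃ a, f a = g p₀.1.2 := ⟨p₀.1.1, p₀.2⟩
        rw [dif_pos h2, h2.choose_spec]
        exact p₀.2
    have step2 : mp H (g ∘ q') (mp H f u) = mp H f u := by
      rw [huv, mpc, e2]
    have step1 : mp H (f ∘ p') (mp H f u) = mp H f u := by rw [mpc, e1]
    have key : mp H (f ∘ fun p : P => p.1.1) (mp H r' (mp H f u)) = mp H f u := by
      rw [mpc, e3, ← mpc, step2, step1]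
    refine ⟨mp H r' (mp H f u), ?_, ?_⟩
    · apply mp_injective H f hf
      rw [mpc]; exact key
    · apply mp_injective H g hg
      have hgπ : (g ∘ fun p : P => p.1.2) = (f ∘ fun p : P => p.1.1) :=
        funext fun p => p.2.symm
      rw [mpc, hgπ, key]; exact huv
  · -- empty intersection
    have hrange : ∀ (a : A) (b : B), f a ≠ g b := fun a b h => hP ⟨⟨(a, b), h⟩⟩
    by_cases hA : Nonempty A
    · have hX : Nonempty X := ⟨f hA.some⟩
      by_cases hB : Nonempty B
      · -- main equalizer case
        rw [mp_pos_pos H hA hX, mp_pos_pos H hB hX] at huv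
        have hc : H.map f (toH H hA u) = H.map g (toH H hB v) :=
          (toH H hX).symm.injective huv
        -- retraction-like map m : X → A
        obtain ⟨m, hm1, hm2⟩ : ∃ m : X → A, m ∘ f = id ∧ m ∘ g = fun _ => hA.some := by
          refine ⟨fun x => if h : ∃ a, f a = x then h.choose else hA.some, ?_, ?_⟩
          · funext a
            have h : ∃ a', f a' = f a := ⟨a, rfl⟩
            simp only [Function.comp_apply, dif_pos h, id]
            exact hf h.choose_spec
          · funext b
            have h : ¬ ∃ a, f a = g b := fun hex => hrange hex.choose b hex.choose_spec
            simp only [Function.comp_apply, dif_neg h]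
        obtain ⟨m', hm1', hm2'⟩ : ∃ m' : X → B, m' ∘ g = id ∧ m' ∘ f = fun _ => hB.some := by
          refine ⟨fun x => if h : ∃ b, g b = x then h.choose else hB.some, ?_, ?_⟩
          · funext b
            have h : ∃ b', g b' = g b := ⟨b, rfl⟩
            simp only [Function.comp_apply, dif_pos h, id]
            exact hg h.choose_spec
          · funext a
            have h : ¬ ∃ b, g b = f a := fun hex => hrange a hex.choose hex.choose_spec.symm
            simp only [Function.comp_apply, dif_neg h]
        set w₀ := H.map (fun _ : B => PUnit.unit) (toH H hB v) with hw₀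
        have hu'eq : toH H hA u = H.map (fun _ : PUnit => hA.some) w₀ := by
          calc toH H hA u = H.map (m ∘ f) (toH H hA u) := by rw [hm1, H.map_id]; rfl
            _ = H.map m (H.map f (toH H hA u)) := (mapc H f m _).symm
            _ = H.map m (H.map g (toH H hB v)) := by rw [hc]
            _ = H.map (m ∘ g) (toH H hB v) := mapc H g m _
            _ = H.map (fun _ : B => hA.some) (toH H hB v) := by rw [hm2]
            _ = H.map (fun _ : PUnit => hA.some) w₀ :=
                  (mapc H (fun _ : B => PUnit.unit) (fun _ : PUnit => hA.some) _).symm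
        have hw₀A : H.map (fun _ : A => PUnit.unit) (toH H hA u) = w₀ := by
          rw [hu'eq, mapc]
          have : (fun _ : A => PUnit.unit) ∘ (fun _ : PUnit => hA.some) = id := rfl
          rw [this, H.map_id]; rfl
        have hv'eq : toH H hB v = H.map (fun _ : PUnit => hB.some) w₀ := by
          calc toH H hB v = H.map (m' ∘ g) (toH H hB v) := by rw [hm1', H.map_id]; rfl
            _ = H.map m' (H.map g (toH H hB v)) := (mapc H g m' _).symm
            _ = H.map m' (H.map f (toH H hA u)) := by rw [hc]
            _ = H.map (m' ∘ f) (toH H hA u) := mapc H f m' _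
            _ = H.map (fun _ : A => hB.some) (toH H hA u) := by rw [hm2']
            _ = H.map (fun _ : PUnit => hB.some)
                  (H.map (fun _ : A => PUnit.unit) (toH H hA u)) :=
                  (mapc H (fun _ : A => PUnit.unit) (fun _ : PUnit => hB.some) _).symm
            _ = H.map (fun _ : PUnit => hB.some) w₀ := by rw [hw₀A]
        -- w₀ lies in the equalizer
        set χ : X → Bool := fun x => if ∃ a, f a = x then true else false with hχ
        have hχf : χ ∘ f = fun _ : A => true := by
          funext a
          have h : ∃ a', f a' = f a := ⟨a, rfl⟩
          simp only [hχ, Function.comp_apply, if_pos h]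
        have hχg : χ ∘ g = fun _ : B => false := by
          funext b
          have h : ¬ ∃ a, f a = g b := fun hex => hrange hex.choose b hex.choose_spec
          simp only [hχ, Function.comp_apply, if_neg h]
        have htrue : H.map (fun _ : B => true) (toH H hB v) =
            H.map (fun _ : A => true) (toH H hA u) := by
          calc H.map (fun _ : B => true) (toH H hB v)
              = H.map ((fun _ : X => true) ∘ g) (toH H hB v) := rfl
            _ = H.map (fun _ : X => true) (H.map g (toH H hB v)) := (mapc H _ _ _).symm
            _ = H.map (fun _ : X => true) (H.map f (toH H hA u)) := by rw [hc]
            _ = H.map ((fun _ : X => true) ∘ f) (toH H hA u) := mapc H _ _ _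
            _ = H.map (fun _ : A => true) (toH H hA u) := rfl
        have hfalse : H.map (fun _ : B => false) (toH H hB v) =
            H.map (fun _ : A => true) (toH H hA u) := by
          calc H.map (fun _ : B => false) (toH H hB v)
              = H.map (χ ∘ g) (toH H hB v) := by rw [hχg]
            _ = H.map χ (H.map g (toH H hB v)) := (mapc H _ _ _).symm
            _ = H.map χ (H.map f (toH H hA u)) := by rw [hc]
            _ = H.map (χ ∘ f) (toH H hA u) := mapc H _ _ _
            _ = H.map (fun _ : A => true) (toH H hA u) := by rw [hχf]
        have hw₀E : H.map (fun _ : PUnit => true) w₀ = H.map (fun _ : PUnit => false) w₀ := by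
          rw [hw₀, mapc, mapc]
          show H.map (fun _ : B => true) (toH H hB v) = H.map (fun _ : B => false) (toH H hB v)
          rw [htrue, hfalse]
        refine ⟨(toE H hP).symm ⟨w₀, hw₀E⟩, ?_, ?_⟩
        · rw [mp_neg_pos H hP hA, Equiv.apply_symm_apply]
          show (toH H hA).symm (H.map (fun _ : PUnit => hA.some) w₀) = u
          rw [← hu'eq, Equiv.symm_apply_apply]
        · rw [mp_neg_pos H hP hB, Equiv.apply_symm_apply]
          show (toH H hB).symm (H.map (fun _ : PUnit => hB.some) w₀) = v
          rw [← hv'eq, Equiv.symm_apply_apply]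
      · -- A nonempty, B empty
        rw [mp_pos_pos H hA hX, mp_neg_pos H hB hX] at huv
        have hc : H.map f (toH H hA u) =
            H.map (fun _ : PUnit => hX.some) (toE H hB v).1 :=
          (toH H hX).symm.injective huv
        refine ⟨(toE H hP).symm (toE H hB v), ?_, ?_⟩
        · rw [mp_neg_pos H hP hA, Equiv.apply_symm_apply]
          haveI := hA
          obtain ⟨r, hr⟩ := hf.hasLeftInverse
          have : H.map (fun _ : PUnit => hA.some) (toE H hB v).1 = toH H hA u := by
            calc H.map (fun _ : PUnit => hA.some) (toE H hB v).1
                = H.map (fun _ : PUnit => r hX.some) (toE H hB v).1 :=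
                  const_indep H _ _ _
              _ = H.map (r ∘ fun _ : PUnit => hX.some) (toE H hB v).1 := rfl
              _ = H.map r (H.map (fun _ : PUnit => hX.some) (toE H hB v).1) :=
                  (mapc H _ _ _).symm
              _ = H.map r (H.map f (toH H hA u)) := by rw [hc]
              _ = H.map (r ∘ f) (toH H hA u) := mapc H _ _ _
              _ = toH H hA u := by
                  have hrf : r ∘ f = id := funext hr
                  rw [hrf, H.map_id]; rfl
          rw [this, Equiv.symm_apply_apply]
        · rw [mp_neg_neg H hP hB, Equiv.apply_symm_apply, Equiv.symm_apply_apply]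
    · by_cases hB : Nonempty B
      · -- A empty, B nonempty
        have hX : Nonempty X := ⟨g hB.some⟩
        rw [mp_neg_pos H hA hX, mp_pos_pos H hB hX] at huv
        have hc : H.map (fun _ : PUnit => hX.some) (toE H hA u).1 =
            H.map g (toH H hB v) :=
          (toH H hX).symm.injective huv
        refine ⟨(toE H hP).symm (toE H hA u), ?_, ?_⟩
        · rw [mp_neg_neg H hP hA, Equiv.apply_symm_apply, Equiv.symm_apply_apply]
        · rw [mp_neg_pos H hP hB, Equiv.apply_symm_apply]
          haveI := hB
          obtain ⟨r, hr⟩ := hg.hasLeftInverse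
          have : H.map (fun _ : PUnit => hB.some) (toE H hA u).1 = toH H hB v := by
            calc H.map (fun _ : PUnit => hB.some) (toE H hA u).1
                = H.map (fun _ : PUnit => r hX.some) (toE H hA u).1 :=
                  const_indep H _ _ _
              _ = H.map (r ∘ fun _ : PUnit => hX.some) (toE H hA u).1 := rfl
              _ = H.map r (H.map (fun _ : PUnit => hX.some) (toE H hA u).1) :=
                  (mapc H _ _ _).symm
              _ = H.map r (H.map g (toH H hB v)) := by rw [hc]
              _ = H.map (r ∘ g) (toH H hB v) := mapc H _ _ _
              _ = toH H hB v := by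
                  have hrg : r ∘ g = id := funext hr
                  rw [hrg, H.map_id]; rfl
          rw [this, Equiv.symm_apply_apply]
      · -- A empty, B empty
        have hEq : toE H hA u = toE H hB v := by
          by_cases hX : Nonempty X
          · rw [mp_neg_pos H hA hX, mp_neg_pos H hB hX] at huv
            have hc := (toH H hX).symm.injective huv
            exact Subtype.ext (punit_cancel H _ hc)
          · rw [mp_neg_neg H hA hX, mp_neg_neg H hB hX] at huv
            exact (toE H hX).symm.injective huv
        refine ⟨(toE H hP).symm (toE H hA u), ?_, ?_⟩
        · rw [mp_neg_neg H hP hA, Equiv.apply_symm_apply, Equiv.symm_apply_apply]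
        · rw [mp_neg_neg H hP hB, Equiv.apply_symm_apply, hEq, Equiv.symm_apply_apply]

end TrnkovaAux
end

/-- Trnková's theorem: every set functor `H` admits a finite-intersection-preserving
modification `H'` agreeing with `H` (naturally) on all nonempty sets and all functions
between nonempty sets; moreover `H' ∅` can be taken to be the equalizer of
`H t, H f : H 1 → H 2` for the two maps `t, f : 1 → 2`. -/
theorem trnkova_closure_exists (H : SetFunctor) :
    ∃ H' : SetFunctor, PreservesFiniteIntersections H' ∧
      ∃ e : ∀ X : Type, Nonempty X → (H'.obj X ≃ H.obj X),
        (∀ (X Y : Type) (hX : Nonempty X) (hY : Nonempty Y) (f : X → Y) (x : H'.obj X),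
          e Y hY (H'.map f x) = H.map f (e X hX x)) ∧
        ∃ j : H'.obj Empty ↪ H.obj PUnit,
          Set.range j =
            {a : H.obj PUnit |
              H.map (fun _ => true) a = H.map (fun _ => false) a} := by
  refine ⟨TrnkovaAux.bar H, TrnkovaAux.bar_preserves H,
    fun X hX => TrnkovaAux.toH H hX, ?_, ?_⟩
  · intro X Y hX hY f x
    show TrnkovaAux.toH H hY (TrnkovaAux.mp H f x) = H.map f (TrnkovaAux.toH H hX x)
    rw [TrnkovaAux.mp_pos_pos H hX hY, Equiv.apply_symm_apply]
  · have hE : ¬ Nonempty Empty := fun ⟨x⟩ => x.elim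
    refine ⟨⟨fun a => (TrnkovaAux.toE H hE a).1,
      fun a b h => (TrnkovaAux.toE H hE).injective (Subtype.ext h)⟩, ?_⟩
    ext a
    constructor
    · rintro ⟨x, rfl⟩
      exact (TrnkovaAux.toE H hE x).2
    · intro h
      exact ⟨(TrnkovaAux.toE H hE).symm ⟨a, h⟩, by
        show ((TrnkovaAux.toE H hE) ((TrnkovaAux.toE H hE).symm ⟨a, h⟩)).1 = a
        rw [Equiv.apply_symm_apply]⟩
end

section
/- Every monad S on Set satisfies: either the canonical natural transformation r : S → S̄ into the Trnková closure is an isomorphism, or S∅ = ∅ and S is isomorphic to the submonad (S̄)⁰ of S̄ obtained by redefining the value at ∅ to be ∅. In particular, if S∅ ≠ ∅ then r_∅ : S∅ → S̄∅ is bijective. -/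
/-- Let `r : S → T` be the monad morphism from a monad `S` on Set into its Trnková
closure `T` (an intersection-preserving monad agreeing with `S`, via `r`, on all
nonempty sets).  Then either `r` is an isomorphism, or `S∅ = ∅` (so that `S` is the
submonad `T⁰` of `T` obtained by redefining the value at `∅` to be `∅`).  In
particular, if `S∅ ≠ ∅` then `r_∅` is bijective. -/
theorem monad_trnkova_closure_dichotomy (S T : SetMonad)
    (r : ∀ X : Type, S.obj X → T.obj X)
    (hnat : ∀ (X Y : Type) (f : X → Y) (x : S.obj X), r Y (S.map f x) = T.map f (r X x))
    (hunit : ∀ (X : Type) (x : X), r X (S.unit X x) = T.unit X x)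
    (hmult : ∀ (X : Type) (p : S.obj (S.obj X)),
      r X (S.mult X p) = T.mult X (T.map (r X) (r (S.obj X) p)))
    (hpres : PreservesFiniteIntersections T.toSetFunctor)
    (hbij : ∀ X : Type, Nonempty X → Function.Bijective (r X)) :
    (∀ X : Type, Function.Bijective (r X)) ∨ IsEmpty (S.obj Empty) := by
  by_cases hS : Nonempty (S.obj Empty)
  · left
    obtain ⟨s₀⟩ := hS
    -- composition helpers
    have hcS : ∀ {X Y Z : Type} (u : X → Y) (v : Y → Z) (p : S.obj X),
        S.map v (S.map u p) = S.map (v ∘ u) p := by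
      intro X Y Z u v p; rw [S.map_comp]; rfl
    have hcT : ∀ {X Y Z : Type} (u : X → Y) (v : Y → Z) (p : T.obj X),
        T.map v (T.map u p) = T.map (v ∘ u) p := by
      intro X Y Z u v p; rw [T.map_comp]; rfl
    set i : Empty → Unit := Empty.elim with hi
    -- T.map i is injective
    have hTi : Function.Injective (T.map i) := by
      intro t t' h
      obtain ⟨w, ⟨hw1, hw2⟩, -⟩ := hpres Unit Empty Empty i i
        (fun a b _ => a.elim) (fun a b _ => a.elim) t t' h
      have hpq : (fun p : {p : Empty × Empty // i p.1 = i p.2} => p.1.1)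
          = (fun p : {p : Empty × Empty // i p.1 = i p.2} => p.1.2) :=
        funext fun p => p.1.1.elim
      rw [← hw1, ← hw2, hpq]
    set f : Unit → Bool := fun _ => true with hf
    set g : Unit → Bool := fun _ => false with hg
    -- key lemma A
    have keyA : ∀ s₁ : S.obj Unit, S.map f s₁ = S.map g s₁ →
        S.map i (S.mult Empty (S.map (fun _ : Unit => s₀) s₁)) = s₁ := by
      intro s₁ hfg
      set k : Bool → S.obj Unit := fun b => bif b then S.unit Unit () else S.map i s₀ with hk
      have h1 : S.mult Unit (S.map k (S.map f s₁)) = s₁ := by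
        rw [hcS f k s₁]
        have : (k ∘ f) = S.unit Unit := funext fun u => rfl
        rw [this, S.right_unit]
      have h2 : S.mult Unit (S.map k (S.map g s₁)) =
          S.mult Unit (S.map (S.map i) (S.map (fun _ : Unit => s₀) s₁)) := by
        rw [hcS g k s₁, hcS (fun _ : Unit => s₀) (S.map i) s₁]
        rfl
      rw [S.mult_natural i (S.map (fun _ : Unit => s₀) s₁)]
      rw [← h2, ← hfg, h1]
    -- key lemma B
    have keyB : ∀ a : S.obj Empty,
        S.mult Empty (S.map (fun _ : Unit => s₀) (S.map i a)) = a := by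
      intro a
      rw [hcS i (fun _ : Unit => s₀) a]
      have : ((fun _ : Unit => s₀) ∘ i) = S.unit Empty := funext fun e => e.elim
      rw [this, S.right_unit]
    have hbU := hbij Unit ⟨()⟩
    have hbB := hbij Bool ⟨true⟩
    -- r Empty is bijective
    have hrE : Function.Bijective (r Empty) := by
      constructor
      · intro a b hab
        have h1 : r Unit (S.map i a) = r Unit (S.map i b) := by
          rw [hnat, hnat, hab]
        have h2 : S.map i a = S.map i b := hbU.1 h1
        rw [← keyB a, ← keyB b, h2]
      · intro t
        obtain ⟨s₁, hs₁⟩ := hbU.2 (T.map i t)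
        have hfg : S.map f s₁ = S.map g s₁ := by
          apply hbB.1
          rw [hnat, hnat, hs₁, hcT i f t, hcT i g t]
          have : (f ∘ i) = (g ∘ i) := funext fun e => e.elim
          rw [this]
        refine ⟨S.mult Empty (S.map (fun _ : Unit => s₀) s₁), hTi ?_⟩
        rw [← hnat, keyA s₁ hfg, hs₁]
    -- extend to all (possibly empty) types
    intro X
    by_cases hX : Nonempty X
    · exact hbij X hX
    · haveI : IsEmpty X := not_nonempty_iff.mp hX
      set eX : X → Empty := fun x => (IsEmpty.false x).elim with heX
      set eX' : Empty → X := Empty.elim with heX'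
      have hXid : (eX' ∘ eX) = id := funext fun x => (IsEmpty.false x).elim
      have hEid : (eX ∘ eX') = id := funext fun e => e.elim
      have hSbij : Function.Bijective (S.map eX) := by
        refine Function.bijective_iff_has_inverse.mpr ⟨S.map eX', ?_, ?_⟩
        · intro p; rw [hcS eX eX' p, hXid, S.map_id]; rfl
        · intro p; rw [hcS eX' eX p, hEid, S.map_id]; rfl
      have hTbij : Function.Bijective (T.map eX') := by
        refine Function.bijective_iff_has_inverse.mpr ⟨T.map eX, ?_, ?_⟩
        · intro p; rw [hcT eX' eX p, hEid, T.map_id]; rfl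
        · intro p; rw [hcT eX eX' p, hXid, T.map_id]; rfl
      have hrw : r X = fun p => T.map eX' (r Empty (S.map eX p)) := by
        funext p
        rw [hnat, hcT eX eX' (r X p), hXid, T.map_id]
        rfl
      rw [hrw]
      exact (hTbij.comp hrE).comp hSbij
  · right
    exact ⟨fun a => hS ⟨a⟩⟩
end

section
/- Let S be a consistent monad on Set such that Sf(y) = y for every set Y, every function f : Y → Y, and every y ∈ SY \ range(η_Y). Then, setting E = S1 \ range(η_1), for every nonempty set X the map r_X : X + E → SX, given by η_X on X and e ↦ Sg(e) for any function g : 1 → X on E, is a well-defined bijection natural in X. Hence S restricted to nonempty sets is isomorphic to the exception monad X ↦ X + E. -/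
section Aux

/-- Collapsing back to `PUnit` recovers `e`. -/
lemma SetMonad.collapse (S : SetMonad) {X : Type} (g : PUnit → X) (e : S.obj PUnit) :
    S.map (fun _ : X => PUnit.unit) (S.map g e) = e := by
  rw [← Function.comp_apply (f := S.map (fun _ : X => PUnit.unit)), ← S.map_comp]
  have h : ((fun _ : X => PUnit.unit) ∘ g) = id := by funext u; cases u; rfl
  rw [h, S.map_id, id]

lemma SetMonad.not_range (S : SetMonad)
    {X : Type} (g : PUnit → X) (e : S.obj PUnit)
    (he : e ∉ Set.range (S.unit PUnit)) :
    S.map g e ∉ Set.range (S.unit X) := by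
  rintro ⟨x, hx⟩
  exact he ⟨PUnit.unit, by
    rw [← S.collapse g e, ← hx, S.unit_natural]⟩

/-- Well-definedness: `S g e` is independent of `g`. -/
lemma SetMonad.wd (S : SetMonad)
    (hfix : ∀ (Y : Type) (f : Y → Y) (y : S.obj Y),
      y ∉ Set.range (S.unit Y) → S.map f y = y)
    {X : Type} (g g' : PUnit → X) (e : S.obj PUnit)
    (he : e ∉ Set.range (S.unit PUnit)) :
    S.map g e = S.map g' e := by
  have hne := S.not_range g e he
  have h := hfix X (fun _ : X => g' PUnit.unit) (S.map g e) hne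
  rw [← Function.comp_apply (f := S.map _), ← S.map_comp] at h
  have hcg : ((fun _ : X => g' PUnit.unit) ∘ g) = g' := by funext u; cases u; rfl
  rw [hcg] at h
  exact h.symm

end Aux

/-- If a consistent monad `S` on Set satisfies `S f (y) = y` for every `f : Y → Y` and
every `y` outside the range of the unit, then with `E = S1 \ range η₁` the maps
`r_X : X + E → S X` (given by `η_X` on `X` and by `e ↦ S g (e)` for any `g : 1 → X`
on `E`) are well defined bijections, natural in nonempty `X`.  Hence `S` restricted to
nonempty sets is isomorphic to the exception monad `X ↦ X + E`. -/

theorem fixing_monad_is_exception_monad (S : SetMonad)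
    (hcons : ∀ X : Type, Function.Injective (S.unit X))
    (hfix : ∀ (Y : Type) (f : Y → Y) (y : S.obj Y),
      y ∉ Set.range (S.unit Y) → S.map f y = y) :
    ∃ r : ∀ X : Type, Nonempty X →
        (X ⊕ {e : S.obj PUnit // e ∉ Set.range (S.unit PUnit)} → S.obj X),
      (∀ (X : Type) (hX : Nonempty X) (x : X), r X hX (Sum.inl x) = S.unit X x) ∧
      (∀ (X : Type) (hX : Nonempty X)
          (e : {e : S.obj PUnit // e ∉ Set.range (S.unit PUnit)}) (g : PUnit → X),
        r X hX (Sum.inr e) = S.map g e.1) ∧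
      (∀ (X : Type) (hX : Nonempty X), Function.Bijective (r X hX)) ∧
      (∀ (X Y : Type) (hX : Nonempty X) (hY : Nonempty Y) (f : X → Y)
          (z : X ⊕ {e : S.obj PUnit // e ∉ Set.range (S.unit PUnit)}),
        r Y hY (Sum.map f id z) = S.map f (r X hX z)) := by
  classical
  refine ⟨fun X hX => Sum.elim (S.unit X)
      (fun e => S.map (fun _ : PUnit => Classical.choice hX) e.1), ?_, ?_, ?_, ?_⟩
  · intro X hX x; rfl
  · intro X hX e g
    exact S.wd hfix _ g e.1 e.2
  · intro X hX
    constructor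
    · rintro (x | e) (x' | e') h
      · simp only [Sum.elim_inl] at h
        exact congrArg Sum.inl (hcons X h)
      · exact absurd ⟨x, h⟩ (S.not_range _ e'.1 e'.2)
      · exact absurd ⟨x', h.symm⟩ (S.not_range _ e.1 e.2)
      · simp only [Sum.elim_inr] at h
        have := congrArg (S.map (fun _ : X => PUnit.unit)) h
        rw [S.collapse, S.collapse] at this
        exact congrArg Sum.inr (Subtype.ext this)
    · intro p
      by_cases hp : p ∈ Set.range (S.unit X)
      · obtain ⟨x, hx⟩ := hp
        exact ⟨Sum.inl x, hx⟩
      · set g : PUnit → X := fun _ => Classical.choice hX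
        set e : S.obj PUnit := S.map (fun _ : X => PUnit.unit) p with he
        have hgp : S.map g e = p := by
          rw [he, ← Function.comp_apply (f := S.map g), ← S.map_comp]
          exact hfix X _ p hp
        have hen : e ∉ Set.range (S.unit PUnit) := by
          rintro ⟨u, hu⟩
          apply hp
          exact ⟨g u, by rw [← hgp, ← hu, S.unit_natural]⟩
        exact ⟨Sum.inr ⟨e, hen⟩, hgp⟩
  · rintro X Y hX hY f (x | e)
    · exact (S.unit_natural f x).symm
    · simp only [Sum.map_inr, id, Sum.elim_inr]
      rw [← Function.comp_apply (f := S.map f), ← S.map_comp]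
      exact S.wd hfix _ _ e.1 e.2
end

section
/- Let n > α be infinite cardinals with the same cofinality. Then there exists a family of more than n subsets of n, each of cardinality α, such that any two distinct members of the family intersect in a set of cardinality strictly less than α. -/
open Cardinal Ordinal Set

/-- A strictly monotone cofinal sequence in `θ` indexed by `κ.ord.ToType`, `κ = cof θ`. -/
lemma exists_cofinal_seq' (θ : Ordinal) (κ : Cardinal) (hκ : θ.cof = κ) :
    ∃ f : κ.ord.ToType → Ordinal,
      StrictMono f ∧ (∀ i, f i < θ) ∧ ∀ b < θ, ∃ i, b ≤ f i := by
  subst hκ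
  obtain ⟨F, hF⟩ := Ordinal.exists_fundamental_sequence θ
  set e := Ordinal.ToType.mk (o := θ.cof.ord) with he
  refine ⟨fun i => F (e.symm i).1 (e.symm i).2, ?_, ?_, ?_⟩
  · intro i j hij
    exact hF.2.1 _ _ (Subtype.coe_lt_coe.2 (e.symm.strictMono hij))
  · intro i
    have := Ordinal.lt_blsub F (e.symm i).1 (e.symm i).2
    rwa [hF.2.2] at this
  · intro b hb
    rw [← hF.2.2] at hb
    obtain ⟨i, hi, hbi⟩ := Ordinal.lt_blsub_iff.1 hb
    refine ⟨e ⟨i, hi⟩, ?_⟩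
    simpa only [OrderIso.symm_apply_apply] using hbi

lemma le_mk_diff' {Y : Type} (nc : Cardinal) (hn : ℵ₀ ≤ nc) (s t : Set Y)
    (hs : nc ≤ #s) (ht : #t < nc) : nc ≤ #↥(s \ t) := by
  by_contra h
  push_neg at h
  have hsub : s ⊆ t ∪ (s \ t) := by
    intro x hx
    by_cases hxt : x ∈ t
    · exact Or.inl hxt
    · exact Or.inr ⟨hx, hxt⟩
  have : #s ≤ #t + #↥(s \ t) :=
    (mk_le_mk_of_subset hsub).trans (mk_union_le _ _)
  exact absurd (hs.trans this) (not_le.2 (Cardinal.add_lt_of_lt hn ht h))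

lemma mk_fiber' {ι X : Type} (ψ : X ≃ ι × X) (i : ι) : #({x : X | (ψ x).1 = i}) = #X := by
  apply mk_congr
  refine ⟨fun x => (ψ x.1).2, fun y => ⟨ψ.symm (i, y), by simp⟩, fun x => ?_, fun y => by simp⟩
  apply Subtype.ext
  have hx : (ψ x.1).1 = i := x.2
  show ψ.symm (i, (ψ x.1).2) = x.1
  conv_rhs => rw [← ψ.symm_apply_apply x.1]
  congr 1
  exact Prod.ext hx.symm rfl

/-- For infinite cardinals `n > α` of the same cofinality there is an almost
`α`-disjoint family of more than `n` subsets of a set of cardinality `n`: each member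
has cardinality `α` and distinct members intersect in fewer than `α` elements. -/
theorem exists_almost_alpha_disjoint_family (α n : Cardinal)
    (hα : Cardinal.aleph0 ≤ α) (hn : α < n) (hcof : n.ord.cof = α.ord.cof)
    (X : Type) (hX : Cardinal.mk X = n) :
    ∃ 𝒜 : Set (Set X),
      n < Cardinal.mk 𝒜 ∧
      (∀ s ∈ 𝒜, Cardinal.mk s = α) ∧
      (∀ s ∈ 𝒜, ∀ t ∈ 𝒜, s ≠ t → Cardinal.mk ↥(s ∩ t) < α) := by
  classical
  have hn0 : ℵ₀ ≤ n := hα.trans hn.le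
  set κ := α.ord.cof with hκdef
  have hκα : κ ≤ α := Ordinal.cof_ord_le α
  have hκ0 : ℵ₀ ≤ κ := Ordinal.aleph0_le_cof.2 (Cardinal.isSuccLimit_ord hα)
  have hκne : κ ≠ 0 := (aleph0_pos.trans_le hκ0).ne'
  -- Zorn's lemma: a maximal almost α-disjoint family
  obtain ⟨M, hM⟩ := zorn_subset
      {𝒜 : Set (Set X) | (∀ s ∈ 𝒜, #↥s = α) ∧
        (∀ s ∈ 𝒜, ∀ t ∈ 𝒜, s ≠ t → #↥(s ∩ t) < α)} (by
    intro c hc hchain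
    refine ⟨⋃₀ c, ⟨?_, ?_⟩, fun s hs => subset_sUnion_of_mem hs⟩
    · rintro s ⟨a, hac, hsa⟩
      exact (hc hac).1 s hsa
    · rintro s ⟨a, hac, hsa⟩ t ⟨b, hbc, htb⟩ hst
      rcases hchain.total hac hbc with h | h
      · exact (hc hbc).2 s (h hsa) t htb hst
      · exact (hc hac).2 s hsa t (h htb) hst)
  obtain ⟨⟨hM1, hM2⟩, hMmax⟩ := hM
  refine ⟨M, ?_, hM1, hM2⟩
  by_contra hlt
  push_neg at hlt
  -- cofinal sequences
  obtain ⟨f, hfmono, hflt, hfcof⟩ := exists_cofinal_seq' α.ord κ hκdef.symm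
  obtain ⟨g, hgmono, hglt, hgcof⟩ := exists_cofinal_seq' n.ord κ (hcof.trans hκdef.symm)
  have hιcard : #κ.ord.ToType = κ := by rw [Cardinal.mk_toType, Cardinal.card_ord]
  -- enumeration of M by ordinals < n.ord
  obtain ⟨e⟩ : Nonempty (↥M ↪ n.ord.ToType) := by
    rw [← Cardinal.le_def, Cardinal.mk_toType, Cardinal.card_ord]
    exact hlt
  set idx : ↥M → Ordinal := fun A => @Ordinal.typein n.ord.ToType (· < ·) isWellOrder_lt (e A) with hidx
  have hidxlt : ∀ A, idx A < n.ord := by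
    intro A
    have := @Ordinal.typein_lt_type n.ord.ToType (· < ·) isWellOrder_lt (e A)
    rwa [Ordinal.type_toType] at this
  have hidxinj : Function.Injective idx := by
    intro A B h
    exact e.injective ((@Ordinal.typein n.ord.ToType (· < ·) isWellOrder_lt).toRelEmbedding.injective h)
  -- partition X into κ slices of size n
  obtain ⟨ψ⟩ : Nonempty (X ≃ κ.ord.ToType × X) := by
    rw [← Cardinal.eq, Cardinal.mk_prod, Cardinal.lift_id, Cardinal.lift_id, hιcard, hX,
      Cardinal.mul_eq_right hn0 (hκα.trans hn.le) hκne]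
  set slice : κ.ord.ToType → Set X := fun i => {x | (ψ x).1 = i} with hslicedef
  have hslice : ∀ i, #↥(slice i) = n := fun i => (mk_fiber' ψ i).trans hX
  have hslicedisj : ∀ i j, i ≠ j → Disjoint (slice i) (slice j) := by
    intro i j hij
    rw [Set.disjoint_left]
    intro x hx1 hx2
    exact hij (hx1.symm.trans hx2)
  -- the sets to avoid
  set S : κ.ord.ToType → Set X := fun i => ⋃ (A : {A : ↥M // idx A < g i}), (A.1 : Set X) with hSdef
  have hSlt : ∀ i, #↥(S i) < n := by
    intro i
    have h1 : #↥(S i) ≤ sum (fun A : {A : ↥M // idx A < g i} => #↥(A.1 : Set X)) :=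
      mk_iUnion_le_sum_mk
    have h2 : sum (fun A : {A : ↥M // idx A < g i} => #↥(A.1 : Set X)) ≤
        sum (fun _ : {A : ↥M // idx A < g i} => α) :=
      Cardinal.sum_le_sum _ _ (fun A => le_of_eq (hM1 A.1.1 A.1.2))
    rw [Cardinal.sum_const'] at h2
    have h3 : #{A : ↥M // idx A < g i} ≤ (g i).card := by
      rw [← Cardinal.mk_toType]
      refine Cardinal.mk_le_of_injective
        (f := fun A => Ordinal.ToType.mk (o := g i) ⟨idx A.1, A.2⟩) ?_
      intro A B h
      have := (Ordinal.ToType.mk (o := g i)).injective h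
      exact Subtype.ext (hidxinj (by simpa using congrArg Subtype.val this))
    have h4 : (g i).card < n := Cardinal.lt_ord.1 (hglt i)
    exact (h1.trans h2).trans_lt (Cardinal.mul_lt_of_lt hn0 (h3.trans_lt h4) hn)
  -- sizes of the blocks
  set β : κ.ord.ToType → Cardinal := fun i => (f i).card + 1 with hβdef
  have hβlt : ∀ i, β i < α := fun i =>
    Cardinal.add_lt_of_lt hα (Cardinal.lt_ord.1 (hflt i)) (one_lt_aleph0.trans_le hα)
  -- choose the blocks
  have hchoose : ∀ i : κ.ord.ToType, ∃ B : Set X, B ⊆ slice i \ S i ∧ #↥B = β i := by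
    intro i
    have hC : n ≤ #↥(slice i \ S i) := le_mk_diff' n hn0 _ _ (hslice i).ge (hSlt i)
    have hβC : β i ≤ #↥(slice i \ S i) := (((hβlt i).le.trans hn.le)).trans hC
    obtain ⟨p, hp⟩ := Cardinal.le_mk_iff_exists_set.1 hβC
    refine ⟨Subtype.val '' p, ?_, ?_⟩
    · rintro x ⟨y, _, rfl⟩
      exact y.2
    · rw [Cardinal.mk_image_eq Subtype.val_injective, hp]
  choose B hBsub hBcard using hchoose
  have hBslice : ∀ i, B i ⊆ slice i := fun i => (hBsub i).trans diff_subset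
  have hBS : ∀ i, Disjoint (B i) (S i) := fun i =>
    Set.disjoint_left.2 fun x hx => ((hBsub i) hx).2
  set Bu := ⋃ i, B i with hBudef
  have hBdisj : Pairwise (Function.onFun Disjoint B) := fun i j hij =>
    (hslicedisj i j hij).mono (hBslice i) (hBslice j)
  -- |Bu| = α
  have hBuα : #↥Bu = α := by
    rw [hBudef, Cardinal.mk_iUnion_eq_sum_mk hBdisj]
    have hsum_eq : (sum fun i => #↥(B i)) = sum β := by
      congr 1
      funext i
      exact hBcard i
    rw [hsum_eq]
    apply le_antisymm
    · calc sum β ≤ sum (fun _ : κ.ord.ToType => α) := Cardinal.sum_le_sum _ _ (fun i => (hβlt i).le)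
        _ = #κ.ord.ToType * α := Cardinal.sum_const' _ _
        _ = α := by rw [hιcard, Cardinal.mul_eq_right hα hκα hκne]
    · rcases lt_or_eq_of_le hκα with hsing | hreg
      · -- κ < α : α is a limit cardinal, sup of the (f i).card is α
        set c₀ := ⨆ i, (f i).card with hc₀
        have hsup_le : ∀ c < α, c ≤ c₀ := by
          intro c hc
          obtain ⟨i, hi⟩ := hfcof c.ord (Cardinal.ord_lt_ord.2 hc)
          have : c ≤ (f i).card := by
            have := Ordinal.card_le_card hi
            rwa [Cardinal.card_ord] at this
          exact this.trans (le_ciSup (Cardinal.bddAbove_range _) i)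
        have hαc₀ : α ≤ c₀ := by
          by_contra h
          push_neg at h
          have h0 : ℵ₀ ≤ c₀ := hsup_le ℵ₀ (hκ0.trans_lt hsing)
          have hsucc : Order.succ c₀ ≤ α := Order.succ_le_of_lt h
          rcases hsucc.lt_or_eq with h1 | h1
          · exact absurd (hsup_le _ h1) (Order.lt_succ c₀).not_ge
          · have hreg' := (Cardinal.isRegular_succ h0).cof_eq
            rw [h1] at hreg'
            exact hsing.ne hreg'
        calc α ≤ c₀ := hαc₀
          _ ≤ sum (fun i => (f i).card) := Cardinal.iSup_le_sum _
          _ ≤ sum β := Cardinal.sum_le_sum _ _ (fun i => self_le_add_right _ _)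
      · -- κ = α : there are α blocks, each nonempty
        calc α = #κ.ord.ToType * 1 := by rw [mul_one, hιcard, hreg]
          _ = sum (fun _ : κ.ord.ToType => (1 : Cardinal)) := (Cardinal.sum_const' _ _).symm
          _ ≤ sum β := Cardinal.sum_le_sum _ _ (fun i => by
              rw [hβdef]
              exact self_le_add_left _ _)
  -- Bu is almost disjoint from every member of M
  have hBint : ∀ A, (hA : A ∈ M) → #↥(Bu ∩ A) < α := by
    intro A hA
    obtain ⟨i₀, hi₀⟩ := hgcof (idx ⟨A, hA⟩) (hidxlt _)
    have hsub : Bu ∩ A ⊆ ⋃ i ∈ Iic i₀, B i := by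
      rintro x ⟨hxB, hxA⟩
      obtain ⟨_, ⟨i, rfl⟩, hi⟩ := hxB
      refine Set.mem_biUnion ?_ hi
      rw [Set.mem_Iic]
      by_contra hii
      push_neg at hii
      have hlt' : idx ⟨A, hA⟩ < g i := hi₀.trans_lt (hgmono hii)
      have hxS : x ∈ S i := Set.mem_iUnion.2 ⟨⟨⟨A, hA⟩, hlt'⟩, hxA⟩
      exact Set.disjoint_left.1 (hBS i) hi hxS
    haveI : Nonempty ↥(Iic i₀) := ⟨⟨i₀, Set.self_mem_Iic⟩⟩
    have h1 : #↥(Bu ∩ A) ≤ #↥(Iic i₀) * ⨆ i : Iic i₀, #↥(B i.1) :=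
      (mk_le_mk_of_subset hsub).trans (Cardinal.mk_biUnion_le _ _)
    have hIic : #↥(Iic i₀) < α := by
      have h2 : (Iic i₀ : Set κ.ord.ToType) ⊆ Iio i₀ ∪ {i₀} := by
        intro x hx
        rcases lt_or_eq_of_le (Set.mem_Iic.1 hx) with h | h
        · exact Or.inl h
        · exact Or.inr h
      have h3 : #↥(Iic i₀) ≤ #↥(Iio i₀) + 1 := by
        refine (mk_le_mk_of_subset h2).trans ?_
        refine (mk_union_le _ _).trans ?_
        simp
      have h4 : #↥(Iio i₀) < κ := Cardinal.mk_Iio_toType_ord_lt i₀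
      exact (h3.trans_lt (Cardinal.add_lt_of_lt hκ0 h4
        (one_lt_aleph0.trans_le hκ0))).trans_le hκα
    have hsup : (⨆ i : Iic i₀, #↥(B i.1)) ≤ β i₀ := by
      refine ciSup_le' ?_
      intro i
      rw [hBcard, hβdef]
      exact add_le_add (Ordinal.card_le_card (hfmono.monotone i.2)) le_rfl
    calc #↥(Bu ∩ A) ≤ #↥(Iic i₀) * (⨆ i : Iic i₀, #↥(B i.1)) := h1
      _ ≤ #↥(Iic i₀) * β i₀ := mul_le_mul_right hsup _
      _ < α := Cardinal.mul_lt_of_lt hα hIic (hβlt i₀)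
  -- contradiction with maximality
  have hP' : (∀ s ∈ M ∪ {Bu}, #↥s = α) ∧
      (∀ s ∈ M ∪ {Bu}, ∀ t ∈ M ∪ {Bu}, s ≠ t → #↥(s ∩ t) < α) := by
    constructor
    · rintro s (hs | hs)
      · exact hM1 s hs
      · rw [Set.mem_singleton_iff] at hs
        rw [hs]
        exact hBuα
    · rintro s (hs | hs) t (ht | ht) hst
      · exact hM2 s hs t ht hst
      · rw [Set.mem_singleton_iff] at ht
        subst ht
        rw [Set.inter_comm]
        exact hBint s hs
      · rw [Set.mem_singleton_iff] at hs
        subst hs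
        exact hBint t ht
      · rw [Set.mem_singleton_iff] at hs ht
        exact absurd (hs.trans ht.symm) hst
  have hBuM : Bu ∈ M :=
    hMmax hP' Set.subset_union_left (Set.mem_union_right _ rfl)
  have := hBint Bu hBuM
  rw [Set.inter_self, hBuα] at this
  exact lt_irrefl α this
end

section
/- Let H be a λ-accessible endofunctor on Set for a regular cardinal λ, and let λ₀ ≥ λ be an infinite upper bound on the cardinalities of Hn for all cardinals n < λ. Then for every cardinal κ ≥ λ₀, the set H(2^κ) has cardinality at most 2^κ. -/
/-- For a `λ`-accessible set functor `H` (every element of `H X` is reachable from a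
set of cardinality `< λ`) and an infinite bound `λ₀ ≥ λ` on `|H n|` for all `n < λ`,
every cardinal `2 ^ κ` with `κ ≥ λ₀` satisfies `|H (2 ^ κ)| ≤ 2 ^ κ`. -/
theorem accessible_fixpoints_of_powers (H : SetFunctor)
    (lam : Cardinal) (hreg : lam.IsRegular)
    (hacc : ∀ (X : Type) (x : H.obj X), ∃ c : Cardinal, c < lam ∧
      ∃ f : c.out → X, x ∈ Set.range (H.map f))
    (lam0 : Cardinal) (hle : lam ≤ lam0) (hinf : Cardinal.aleph0 ≤ lam0)
    (hbound : ∀ c : Cardinal, c < lam → Cardinal.mk (H.obj c.out) ≤ lam0)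
    (κ : Cardinal) (hκ : lam0 ≤ κ) :
    Cardinal.mk (H.obj ((2 : Cardinal) ^ κ).out) ≤ (2 : Cardinal) ^ κ := by
  set X : Type := ((2 : Cardinal) ^ κ).out with hXdef
  have hX : Cardinal.mk X = (2 : Cardinal) ^ κ := Cardinal.mk_out _
  have hκinf : Cardinal.aleph0 ≤ κ := hinf.trans hκ
  have hκ2 : κ ≤ (2 : Cardinal) ^ κ := (Cardinal.cantor κ).le
  have h2inf : Cardinal.aleph0 ≤ (2 : Cardinal) ^ κ := hκinf.trans hκ2
  have h2sq : (2 : Cardinal) ^ κ * (2 : Cardinal) ^ κ = (2 : Cardinal) ^ κ :=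
    Cardinal.mul_eq_self h2inf
  -- index by the order type of `lam`
  haveI : IsWellOrder lam.ord.ToType (· < ·) := isWellOrder_lt
  set g : lam.ord.ToType → Cardinal := fun i => (Ordinal.typein (α := lam.ord.ToType) (· < ·) i).card with hgdef
  have hg : ∀ i, g i < lam := by
    intro i
    rw [hgdef]
    rw [← Cardinal.lt_ord]
    have := Ordinal.typein_lt_type (α := lam.ord.ToType) (· < ·) i
    rwa [Ordinal.type_toType] at this
  -- surjection onto `H.obj X`
  have hsurj : Function.Surjective
      (fun p : (Σ i : lam.ord.ToType, ((g i).out → X) × H.obj (g i).out) => H.map p.2.1 p.2.2) := by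
    intro x
    obtain ⟨c, hc, f, y, hy⟩ := hacc X x
    have hord : c.ord < Ordinal.type (α := lam.ord.ToType) (· < ·) := by
      rw [Ordinal.type_toType]
      exact (Cardinal.ord_lt_ord).mpr hc
    obtain ⟨i, hi⟩ := Ordinal.typein_surj (α := lam.ord.ToType) (· < ·) hord
    have hgi : g i = c := by rw [hgdef]; simp only; rw [hi, Cardinal.card_ord]
    subst hgi
    exact ⟨⟨i, f, y⟩, hy⟩
  have h1 : Cardinal.mk (H.obj X) ≤
      Cardinal.mk (Σ i : lam.ord.ToType, ((g i).out → X) × H.obj (g i).out) :=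
    Cardinal.mk_le_of_surjective hsurj
  have hterm : ∀ i : lam.ord.ToType, Cardinal.mk (((g i).out → X) × H.obj (g i).out) ≤
      (2 : Cardinal) ^ κ := by
    intro i
    rw [Cardinal.mk_prod, Cardinal.lift_id, Cardinal.lift_id]
    have hfun : Cardinal.mk ((g i).out → X) ≤ (2 : Cardinal) ^ κ := by
      rw [Cardinal.mk_arrow, Cardinal.lift_id, Cardinal.lift_id, hX, Cardinal.mk_out]
      calc ((2 : Cardinal) ^ κ) ^ (g i) ≤ ((2 : Cardinal) ^ κ) ^ κ :=
            Cardinal.power_le_power_left (Cardinal.power_ne_zero κ two_ne_zero) (((hg i).le.trans hle).trans hκ)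
        _ = (2 : Cardinal) ^ (κ * κ) := by rw [← Cardinal.power_mul]
        _ = (2 : Cardinal) ^ κ := by rw [Cardinal.mul_eq_self hκinf]
    have hH : Cardinal.mk (H.obj (g i).out) ≤ (2 : Cardinal) ^ κ :=
      ((hbound _ (hg i)).trans hκ).trans hκ2
    calc Cardinal.mk ((g i).out → X) * Cardinal.mk (H.obj (g i).out)
        ≤ (2 : Cardinal) ^ κ * (2 : Cardinal) ^ κ := mul_le_mul' hfun hH
      _ = (2 : Cardinal) ^ κ := h2sq
  have h2 : Cardinal.mk (Σ i : lam.ord.ToType, ((g i).out → X) × H.obj (g i).out) ≤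
      Cardinal.mk lam.ord.ToType * (2 : Cardinal) ^ κ := by
    rw [Cardinal.mk_sigma, ← Cardinal.sum_const']
    exact Cardinal.sum_le_sum _ _ hterm
  have hI : Cardinal.mk lam.ord.ToType = lam := by rw [Cardinal.mk_toType, Cardinal.card_ord]
  have h3 : Cardinal.mk lam.ord.ToType * (2 : Cardinal) ^ κ ≤ (2 : Cardinal) ^ κ := by
    rw [hI]
    calc lam * (2 : Cardinal) ^ κ ≤ (2 : Cardinal) ^ κ * (2 : Cardinal) ^ κ :=
          mul_le_mul' ((hle.trans hκ).trans hκ2) le_rfl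
      _ = (2 : Cardinal) ^ κ := h2sq
  exact (h1.trans h2).trans h3
end

section
/- Let S be a consistent monad on Set, Y a set, f : Y → Y a function, and y ∈ SY \ range(η_Y) with Sf(y) ≠ y. Let X be a set admitting a split injection m : Y → X (with retraction e : X → Y). Then there exists x ∈ SX \ range(η_X) such that for the two coproduct injections v₁, v₂ : X → X + X one has Sv₁(x) ≠ Sv₂(x). -/
/-- Let `S` be a consistent monad on Set, `y ∈ S Y \ range η_Y` with `S f (y) ≠ y`
for some `f : Y → Y`, and `m : Y → X` a split injection with retraction `e`.  Then
there is `x ∈ S X \ range η_X` whose images under the two coproduct injections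
`X → X + X` differ. -/
theorem exists_element_separated_by_coproduct_injections (S : SetMonad)
    (hcons : ∀ X : Type, Function.Injective (S.unit X))
    (Y : Type) (f : Y → Y) (y : S.obj Y)
    (hy : y ∉ Set.range (S.unit Y)) (hfy : S.map f y ≠ y)
    (X : Type) (m : Y → X) (e : X → Y) (he : e ∘ m = id) :
    ∃ x : S.obj X, x ∉ Set.range (S.unit X) ∧
      S.map (Sum.inl : X → X ⊕ X) x ≠ S.map (Sum.inr : X → X ⊕ X) x := by
  have hem : S.map e ∘ S.map m = id := by
    rw [← S.map_comp, he, S.map_id]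
  refine ⟨S.map m y, ?_, ?_⟩
  · rintro ⟨x₀, hx₀⟩
    apply hy
    refine ⟨e x₀, ?_⟩
    have := congrArg (S.map e) hx₀
    rw [S.unit_natural] at this
    have h2 : S.map e (S.map m y) = y := congrFun hem y
    rw [h2] at this
    exact this
  · intro hEq
    have comp : ∀ {A B C : Type} (g : B → C) (h : A → B) (x : S.obj A),
        S.map g (S.map h x) = S.map (g ∘ h) x := fun g h x =>
      (congrFun (S.map_comp h g) x).symm
    have this' := (comp (Sum.elim id (m ∘ f ∘ e)) Sum.inl (S.map m y)).symm.trans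
      ((congrArg (S.map (Sum.elim id (m ∘ f ∘ e))) hEq).trans
        (comp (Sum.elim id (m ∘ f ∘ e)) Sum.inr (S.map m y)))
    have h1 : S.map (Sum.elim id (m ∘ f ∘ e) ∘ Sum.inl) (S.map m y) = S.map m y := by
      have : (Sum.elim id (m ∘ f ∘ e) ∘ Sum.inl : X → X) = id := rfl
      rw [this, S.map_id]; rfl
    have h2 : S.map (Sum.elim id (m ∘ f ∘ e) ∘ Sum.inr) (S.map m y)
        = S.map m (S.map f y) := by
      have heq : (Sum.elim id (m ∘ f ∘ e) ∘ Sum.inr : X → X) = m ∘ f ∘ e := rfl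
      rw [heq]
      have : (m ∘ f ∘ e) ∘ m = m ∘ f := by
        ext z
        show m (f (e (m z))) = m (f z)
        rw [show e (m z) = z from congrFun he z]
      calc S.map (m ∘ f ∘ e) (S.map m y) = S.map ((m ∘ f ∘ e) ∘ m) y := comp _ _ _
        _ = S.map (m ∘ f) y := by rw [this]
        _ = S.map m (S.map f y) := (comp _ _ _).symm
    rw [h1, h2] at this'
    have hinj : Function.Injective (S.map m) := Function.LeftInverse.injective
      (g := S.map e) (fun a => congrFun hem a)
    exact hfy (hinj this'.symm)
end
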